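/- Let n ≥ 2. There exists a constant c > 0, depending only on n, such that for every X' ∈ ℝ^{n-1} whose first coordinate satisfies X₁ ≥ |X'|/5 and with 1/2 ≤ |X'| ≤ 5/2, and for every τ with 0 < τ ≤ 1, one has ∫_{|X'-z'| ≤ |X'|/10} e^{-|X'-z'|²/τ} (z₁/|z'|ⁿ) dz' ≥ c τ^{(n-1)/2}. -/

import Mathlib

open MeasureTheory Real Set

open Metric

lemma coord_abs_le_norm {m : ℕ} (x : EuclideanSpace ℝ (Fin m)) (i : Fin m) : |x i| ≤ ‖x‖ := by
  rw [EuclideanSpace.norm_eq]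
  have h1 : |x i| = Real.sqrt (‖x i‖ ^ 2) := by rw [Real.sqrt_sq_eq_abs]; simp
  rw [h1]
  exact Real.sqrt_le_sqrt <|
    Finset.single_le_sum (f := fun j => ‖x j‖ ^ 2) (fun j _ => by positivity) (Finset.mem_univ i)

/-- Estimate of `J₁`: for `X₁ ≥ |X'|/5`, `1/2 ≤ |X'| ≤ 5/2` and `0 < τ ≤ 1`,
`∫_{|X'-z'| ≤ |X'|/10} e^{-|X'-z'|²/τ} z₁/|z'|ⁿ dz' ≥ c τ^{(n-1)/2}`. -/
theorem stmt_7 (n : ℕ) (hn : 2 ≤ n) :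
    ∃ c : ℝ, 0 < c ∧
      ∀ X' : EuclideanSpace ℝ (Fin (n-1)),
        ‖X'‖/5 ≤ X' ⟨0, by omega⟩ → 1/2 ≤ ‖X'‖ → ‖X'‖ ≤ 5/2 →
        ∀ τ : ℝ, 0 < τ → τ ≤ 1 →
          IntegrableOn
            (fun z' : EuclideanSpace ℝ (Fin (n-1)) =>
              Real.exp (-‖X' - z'‖^2/τ) * (z' ⟨0, by omega⟩ / ‖z'‖^n))
            {z' : EuclideanSpace ℝ (Fin (n-1)) | ‖X' - z'‖ ≤ ‖X'‖/10} volume ∧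
          c * τ ^ (((n:ℝ) - 1)/2) ≤
            ∫ z' in {z' : EuclideanSpace ℝ (Fin (n-1)) | ‖X' - z'‖ ≤ ‖X'‖/10},
              Real.exp (-‖X' - z'‖^2/τ) * (z' ⟨0, by omega⟩ / ‖z'‖^n) := by
  set d : ℕ := n - 1 with hd
  have hd1 : 1 ≤ d := by omega
  set i0 : Fin d := ⟨0, by omega⟩ with hi0
  set V : ℝ := (volume (ball (0 : EuclideanSpace ℝ (Fin d)) 1)).toReal with hV
  have hVpos : 0 < V := by
    rw [hV]
    apply ENNReal.toReal_pos
    · exact (measure_ball_pos volume _ one_pos).ne'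
    · exact measure_ball_lt_top.ne
  set κ : ℝ := Real.exp (-(1:ℝ)/400) * ((1/20) / (11/4:ℝ)^n) with hκ
  have hκpos : 0 < κ := by positivity
  refine ⟨κ * V / 20 ^ d, by positivity, ?_⟩
  intro X' hX1 hXlo hXhi τ hτ hτ1
  set f : EuclideanSpace ℝ (Fin d) → ℝ := fun z' =>
    Real.exp (-‖X' - z'‖^2/τ) * (z' i0 / ‖z'‖^n) with hf
  have hSeq : {z' : EuclideanSpace ℝ (Fin d) | ‖X' - z'‖ ≤ ‖X'‖/10}
      = closedBall X' (‖X'‖/10) := by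
    ext z; simp [Metric.mem_closedBall, dist_eq_norm, norm_sub_rev]
  -- bounds on the big ball
  have hz1 : ∀ z ∈ closedBall X' (‖X'‖/10), (1/20 : ℝ) ≤ z i0 := by
    intro z hz
    rw [mem_closedBall, dist_eq_norm] at hz
    have h2 : |(X' - z) i0| ≤ ‖X' - z‖ := coord_abs_le_norm _ _
    have h3 : (X' - z) i0 = X' i0 - z i0 := rfl
    rw [norm_sub_rev] at hz
    have := abs_le.1 h2
    nlinarith [hX1, hXlo]
  have hznorm : ∀ z ∈ closedBall X' (‖X'‖/10), ‖z‖ ≤ 11/4 := by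
    intro z hz
    rw [mem_closedBall, dist_eq_norm] at hz
    calc ‖z‖ = ‖X' + (z - X')‖ := by rw [add_sub_cancel]
    _ ≤ ‖X'‖ + ‖z - X'‖ := norm_add_le _ _
    _ ≤ 5/2 + 5/2/10 := by
        have : ‖X'‖/10 ≤ 5/2/10 := by linarith
        linarith
    _ = 11/4 := by norm_num
  have hzpos : ∀ z ∈ closedBall X' (‖X'‖/10), (1/20 : ℝ) ≤ ‖z‖ := by
    intro z hz
    have := hz1 z hz
    have h2 : |z i0| ≤ ‖z‖ := coord_abs_le_norm _ _
    have := abs_le.1 h2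
    linarith [(abs_le.1 h2).1, le_abs_self (z i0)]
  have hfnonneg : ∀ z ∈ closedBall X' (‖X'‖/10), 0 ≤ f z := by
    intro z hz
    have h1 := hz1 z hz
    have h2 := hzpos z hz
    have : (0:ℝ) < ‖z‖ := by linarith
    positivity
  -- integrability on compact ball
  have hmeas : MeasurableSet (closedBall X' (‖X'‖/10)) := measurableSet_closedBall
  have hcont : ContinuousOn f (closedBall X' (‖X'‖/10)) := by
    have c1 : Continuous fun z : EuclideanSpace ℝ (Fin d) => Real.exp (-‖X' - z‖^2/τ) := by
      fun_prop
    have c2 : Continuous fun z : EuclideanSpace ℝ (Fin d) => z i0 :=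
      (EuclideanSpace.proj i0).continuous
    apply (c1.continuousOn).mul
    apply ContinuousOn.div c2.continuousOn (continuous_norm.pow n).continuousOn
    intro z hz
    have := hzpos z hz
    exact pow_ne_zero _ (by linarith : (0:ℝ) < ‖z‖).ne'
  have hint : IntegrableOn f (closedBall X' (‖X'‖/10)) volume :=
    hcont.integrableOn_compact (isCompact_closedBall _ _)
  -- small ball
  have hsqrtτ : Real.sqrt τ ≤ 1 := Real.sqrt_le_one.2 hτ1
  have hsqrtpos : 0 < Real.sqrt τ := Real.sqrt_pos.2 hτ
  have hsub : closedBall X' (Real.sqrt τ / 20) ⊆ closedBall X' (‖X'‖/10) :=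
    closedBall_subset_closedBall (by linarith)
  -- pointwise lower bound on the small ball
  have hptwise : ∀ z ∈ closedBall X' (Real.sqrt τ / 20), κ ≤ f z := by
    intro z hz
    have hzS := hsub hz
    rw [mem_closedBall, dist_eq_norm, norm_sub_rev (z) X'] at hz
    have h1 := hz1 z hzS
    have h2 := hznorm z hzS
    have h3 := hzpos z hzS
    have hzn : (0:ℝ) < ‖z‖ := by linarith
    have hexp : Real.exp (-(1:ℝ)/400) ≤ Real.exp (-‖X' - z‖^2/τ) := by
      apply Real.exp_le_exp.2
      have hsq : ‖X' - z‖^2 ≤ τ/400 := by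
        have : ‖X' - z‖^2 ≤ (Real.sqrt τ / 20)^2 := by
          apply sq_le_sq' <;> nlinarith [norm_nonneg (X' - z)]
        rw [div_pow, Real.sq_sqrt hτ.le] at this
        linarith
      rw [neg_div, neg_div, neg_le_neg_iff]
      rw [div_le_div_iff₀ hτ (by norm_num)]
      linarith
    have hratio : (1/20 : ℝ) / (11/4:ℝ)^n ≤ z i0 / ‖z‖^n := by
      apply div_le_div₀ (by linarith) h1 (by positivity)
      exact pow_le_pow_left₀ hzn.le h2 n
    calc κ = Real.exp (-(1:ℝ)/400) * ((1/20) / (11/4:ℝ)^n) := rfl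
    _ ≤ Real.exp (-‖X' - z‖^2/τ) * (z i0 / ‖z‖^n) := by
        apply mul_le_mul hexp hratio (by positivity) (Real.exp_pos _).le
    _ = f z := rfl
  -- volume of small ball
  have hfinrank : Module.finrank ℝ (EuclideanSpace ℝ (Fin d)) = d :=
    finrank_euclideanSpace_fin
  have hvol : (volume (closedBall X' (Real.sqrt τ / 20))).toReal
      = (Real.sqrt τ / 20)^d * V := by
    rw [Measure.addHaar_closedBall volume X' (by positivity), hfinrank,
      ENNReal.toReal_mul, ENNReal.toReal_ofReal (by positivity)]
  have hint' : IntegrableOn f (closedBall X' (Real.sqrt τ / 20)) volume :=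
    hint.mono_set hsub
  have hstep1 : κ * ((Real.sqrt τ / 20)^d * V)
      ≤ ∫ z in closedBall X' (Real.sqrt τ / 20), f z := by
    rw [← hvol]
    have := setIntegral_ge_of_const_le_real measurableSet_closedBall
      (measure_closedBall_lt_top).ne hptwise hint'
    exact this
  have hstep2 : (∫ z in closedBall X' (Real.sqrt τ / 20), f z)
      ≤ ∫ z in closedBall X' (‖X'‖/10), f z := by
    apply setIntegral_mono_set hint
    · exact (ae_restrict_iff' hmeas).2 (Filter.Eventually.of_forall hfnonneg)
    · exact HasSubset.Subset.eventuallyLE hsub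
  -- final computation
  have hcast : ((n:ℝ) - 1) = (d : ℝ) := by
    rw [hd]; push_cast [Nat.cast_sub (by omega : 1 ≤ n)]; ring
  have hexpr : τ ^ (((n:ℝ) - 1)/2) = (Real.sqrt τ)^d := by
    rw [hcast, Real.sqrt_eq_rpow, ← Real.rpow_natCast (τ ^ ((1:ℝ)/2)) d,
      ← Real.rpow_mul hτ.le]
    ring_nf
  constructor
  · rw [hSeq]; exact hint
  · rw [hSeq, hexpr]
    calc κ * V / 20 ^ d * Real.sqrt τ ^ d
        = κ * ((Real.sqrt τ / 20)^d * V) := by rw [div_pow]; ring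
    _ ≤ ∫ z in closedBall X' (‖X'‖/10), f z := hstep1.trans hstep2
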